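/- Fix real numbers δv > 0, 0 < δz < 2, c > 0 and an integer N ≥ 2, and let W = X⁻¹Y be the matrix of the fully discrete Crank–Nicolson compact scheme. Then the spectral norm of W satisfies ‖W‖₂ ≤ √(12/5) · (2c/δz² + c/6) · δv. -/

import Mathlib

open Matrix
open scoped Matrix.Norms.L2Operator



/-- Tridiagonal Toeplitz matrix of size `n × n` with diagonal value `a`,
subdiagonal value `b` and superdiagonal value `d`. -/
def tridiag (n : ℕ) (b a d : ℝ) : Matrix (Fin n) (Fin n) ℝ :=
  Matrix.of fun q q' : Fin n =>
    if (q : ℤ) = (q' : ℤ) then a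
    else if (q : ℤ) = (q' : ℤ) + 1 then b
    else if (q : ℤ) + 1 = (q' : ℤ) then d
    else 0

lemma filter_small {n : ℕ} (p : Fin n → Prop) [DecidablePred p]
    (h1 : ∀ a b, p a → p b → a = b) :
    Finset.univ.filter p = ∅ ∨ ∃ x, Finset.univ.filter p = {x} := by
  rcases (Finset.univ.filter p).eq_empty_or_nonempty with h | ⟨x, hx⟩
  · exact Or.inl h
  · refine Or.inr ⟨x, Finset.eq_singleton_iff_unique_mem.2 ⟨hx, fun y hy => ?_⟩⟩
    exact h1 y x (Finset.mem_filter.1 hy).2 (Finset.mem_filter.1 hx).2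

lemma sum_sq_le {n : ℕ} (P : Fin n → Fin n → Prop) [∀ q q', Decidable (P q q')]
    (hrow : ∀ q q₁ q₂, P q q₁ → P q q₂ → q₁ = q₂)
    (hcol : ∀ q₁ q₂ q', P q₁ q' → P q₂ q' → q₁ = q₂)
    (v : Fin n → ℝ) :
    ∑ q, (∑ q', if P q q' then v q' else 0)^2 ≤ ∑ q, v q ^ 2 := by
  have step1 : ∀ q : Fin n, (∑ q', if P q q' then v q' else 0)^2
      ≤ ∑ q', if P q q' then v q' ^ 2 else 0 := by
    intro q
    rw [← Finset.sum_filter, ← Finset.sum_filter]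
    rcases filter_small (P q) (hrow q) with h | ⟨x, h⟩ <;> rw [h] <;> simp
  calc ∑ q, (∑ q', if P q q' then v q' else 0)^2
      ≤ ∑ q, ∑ q', if P q q' then v q' ^ 2 else 0 := Finset.sum_le_sum fun q _ => step1 q
    _ = ∑ q', ∑ q, if P q q' then v q' ^ 2 else 0 := Finset.sum_comm
    _ ≤ ∑ q', v q' ^ 2 := by
        refine Finset.sum_le_sum fun q' _ => ?_
        rw [← Finset.sum_filter]
        rcases filter_small (fun q => P q q') (fun a b ha hb => hcol a b q' ha hb) with h | ⟨x, h⟩ <;>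
          rw [h] <;> simp [sq_nonneg]

lemma opnorm_le {n : ℕ} (A : Matrix (Fin n) (Fin n) ℝ) {K : ℝ} (hK : 0 ≤ K)
    (h : ∀ v : Fin n → ℝ, ∑ q, (A *ᵥ v) q ^ 2 ≤ K ^ 2 * ∑ q, v q ^ 2) : ‖A‖ ≤ K := by
  rw [Matrix.cstar_norm_def]
  refine ContinuousLinearMap.opNorm_le_bound _ hK fun x => ?_
  set v : Fin n → ℝ := (WithLp.equiv 2 (Fin n → ℝ)) x with hv
  have hx : Matrix.toEuclideanCLM (𝕜 := ℝ) A x = (WithLp.equiv 2 (Fin n → ℝ)).symm (A *ᵥ v) := by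
    have h0 : Matrix.toEuclideanCLM (𝕜 := ℝ) A ((WithLp.equiv 2 (Fin n → ℝ)).symm v) = (WithLp.equiv 2 (Fin n → ℝ)).symm (Matrix.toLin' A v) := Matrix.toEuclideanCLM_toLp A v
    rw [Matrix.toLin'_apply] at h0
    rw [← h0, hv, Equiv.symm_apply_apply]
  rw [hx]
  have h1 : ‖(WithLp.equiv 2 (Fin n → ℝ)).symm (A *ᵥ v)‖ = Real.sqrt (∑ q, (A *ᵥ v) q ^ 2) := by
    rw [EuclideanSpace.norm_eq]
    congr 1
    refine Finset.sum_congr rfl fun q _ => ?_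
    simp [Real.norm_eq_abs, sq_abs]
  have h2 : ‖x‖ = Real.sqrt (∑ q, v q ^ 2) := by
    rw [EuclideanSpace.norm_eq]
    congr 1
    refine Finset.sum_congr rfl fun q _ => ?_
    simp [hv, Real.norm_eq_abs, sq_abs]
  rw [h1, h2, ← Real.sqrt_sq hK, ← Real.sqrt_mul (sq_nonneg K)]
  exact Real.sqrt_le_sqrt (h v)

lemma mulVecL {n : ℕ} (v : Fin n → ℝ) (q : Fin n) :
    (tridiag n 1 0 0 *ᵥ v) q = ∑ q' : Fin n, if (q:ℤ) = (q':ℤ) + 1 then v q' else 0 := by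
  rw [Matrix.mulVec, dotProduct]
  refine Finset.sum_congr rfl fun q' _ => ?_
  simp only [tridiag, Matrix.of_apply]
  split_ifs <;> first | ring1 | omega

lemma mulVecU {n : ℕ} (v : Fin n → ℝ) (q : Fin n) :
    (tridiag n 0 0 1 *ᵥ v) q = ∑ q' : Fin n, if (q:ℤ) + 1 = (q':ℤ) then v q' else 0 := by
  rw [Matrix.mulVec, dotProduct]
  refine Finset.sum_congr rfl fun q' _ => ?_
  simp only [tridiag, Matrix.of_apply]
  split_ifs <;> first | ring1 | omega

lemma normL_le (n : ℕ) : ‖tridiag n 1 0 0‖ ≤ 1 := by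
  refine opnorm_le _ zero_le_one fun v => ?_
  simp only [mulVecL, one_pow, one_mul]
  exact sum_sq_le _ (fun q a b ha hb => Fin.ext (by omega)) (fun a b q' ha hb => Fin.ext (by omega)) v

lemma normU_le (n : ℕ) : ‖tridiag n 0 0 1‖ ≤ 1 := by
  refine opnorm_le _ zero_le_one fun v => ?_
  simp only [mulVecU, one_pow, one_mul]
  exact sum_sq_le _ (fun q a b ha hb => Fin.ext (by omega)) (fun a b q' ha hb => Fin.ext (by omega)) v

lemma tridiag_decomp (n : ℕ) (b a d : ℝ) :
    tridiag n b a d = a • (1 : Matrix (Fin n) (Fin n) ℝ) + b • tridiag n 1 0 0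
      + d • tridiag n 0 0 1 := by
  ext q q'
  have hone : (1 : Matrix (Fin n) (Fin n) ℝ) q q' = if (q:ℤ) = (q':ℤ) then 1 else 0 := by
    rw [Matrix.one_apply]
    by_cases h : q = q'
    · subst h; simp
    · rw [if_neg h, if_neg (by simpa [Fin.ext_iff] using h)]
  simp only [tridiag, Matrix.of_apply, Matrix.add_apply, Matrix.smul_apply, smul_eq_mul, hone]
  split_ifs <;> first | ring1 | omega

lemma norm_tridiag_le (n : ℕ) (b a d : ℝ) : ‖tridiag n b a d‖ ≤ |a| + |b| + |d| := by
  have h1 : ‖(1 : Matrix (Fin n) (Fin n) ℝ)‖ ≤ 1 := by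
    rw [Matrix.cstar_norm_def, _root_.map_one]; exact ContinuousLinearMap.norm_id_le
  rw [tridiag_decomp]
  calc ‖a • (1 : Matrix (Fin n) (Fin n) ℝ) + b • tridiag n 1 0 0 + d • tridiag n 0 0 1‖
      ≤ ‖a • (1 : Matrix (Fin n) (Fin n) ℝ) + b • tridiag n 1 0 0‖ + ‖d • tridiag n 0 0 1‖ :=
        norm_add_le _ _
    _ ≤ (‖a • (1 : Matrix (Fin n) (Fin n) ℝ)‖ + ‖b • tridiag n 1 0 0‖) + ‖d • tridiag n 0 0 1‖ := by
        gcongr; exact norm_add_le _ _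
    _ ≤ (|a| * 1 + |b| * 1) + |d| * 1 := by
        rw [norm_smul, norm_smul, norm_smul]
        simp only [Real.norm_eq_abs]
        exact add_le_add (add_le_add (mul_le_mul_of_nonneg_left h1 (abs_nonneg a))
          (mul_le_mul_of_nonneg_left (normL_le n) (abs_nonneg b)))
          (mul_le_mul_of_nonneg_left (normU_le n) (abs_nonneg d))
    _ = |a| + |b| + |d| := by ring

lemma coercive {n : ℕ} (b a d : ℝ) (x : EuclideanSpace ℝ (Fin n)) :
    (a - |b| - |d|) * ‖x‖ ^ 2 ≤ inner ℝ x (Matrix.toEuclideanCLM (𝕜 := ℝ) (tridiag n b a d) x) := by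
  rw [tridiag_decomp, map_add, map_add, _root_.map_smul, _root_.map_smul, _root_.map_smul, _root_.map_one]
  simp only [ContinuousLinearMap.add_apply, ContinuousLinearMap.smul_apply,
    ContinuousLinearMap.one_apply, inner_add_right, real_inner_smul_right]
  have hL : |inner ℝ x ((Matrix.toEuclideanCLM (𝕜 := ℝ) (tridiag n 1 0 0)) x)| ≤ ‖x‖ ^ 2 := by
    refine le_trans (abs_real_inner_le_norm _ _) ?_
    have := ((Matrix.toEuclideanCLM (𝕜 := ℝ) (tridiag n 1 0 0))).le_opNorm x
    have h2 : ‖Matrix.toEuclideanCLM (𝕜 := ℝ) (tridiag n 1 0 0)‖ ≤ 1 := normL_le n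
    nlinarith [norm_nonneg x, norm_nonneg ((Matrix.toEuclideanCLM (𝕜 := ℝ) (tridiag n 1 0 0)) x)]
  have hU : |inner ℝ x ((Matrix.toEuclideanCLM (𝕜 := ℝ) (tridiag n 0 0 1)) x)| ≤ ‖x‖ ^ 2 := by
    refine le_trans (abs_real_inner_le_norm _ _) ?_
    have := ((Matrix.toEuclideanCLM (𝕜 := ℝ) (tridiag n 0 0 1))).le_opNorm x
    have h2 : ‖Matrix.toEuclideanCLM (𝕜 := ℝ) (tridiag n 0 0 1)‖ ≤ 1 := normU_le n
    nlinarith [norm_nonneg x, norm_nonneg ((Matrix.toEuclideanCLM (𝕜 := ℝ) (tridiag n 0 0 1)) x)]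
  have hx : inner ℝ x x = ‖x‖ ^ 2 := real_inner_self_eq_norm_sq x
  rw [hx]
  have hb := abs_nonneg b
  have hd := abs_nonneg d
  have h3 : b * inner ℝ x ((Matrix.toEuclideanCLM (𝕜 := ℝ) (tridiag n 1 0 0)) x) ≥ -(|b| * ‖x‖^2) := by
    have := neg_abs_le (b * inner ℝ x ((Matrix.toEuclideanCLM (𝕜 := ℝ) (tridiag n 1 0 0)) x))
    rw [abs_mul] at this
    nlinarith [abs_nonneg (inner ℝ x ((Matrix.toEuclideanCLM (𝕜 := ℝ) (tridiag n 1 0 0)) x) : ℝ)]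
  have h4 : d * inner ℝ x ((Matrix.toEuclideanCLM (𝕜 := ℝ) (tridiag n 0 0 1)) x) ≥ -(|d| * ‖x‖^2) := by
    have := neg_abs_le (d * inner ℝ x ((Matrix.toEuclideanCLM (𝕜 := ℝ) (tridiag n 0 0 1)) x))
    rw [abs_mul] at this
    nlinarith [abs_nonneg (inner ℝ x ((Matrix.toEuclideanCLM (𝕜 := ℝ) (tridiag n 0 0 1)) x) : ℝ)]
  nlinarith

lemma isUnit_tridiag {n : ℕ} (b a d : ℝ) (h : 0 < a - |b| - |d|) :
    IsUnit (tridiag n b a d) := by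
  rw [← Matrix.mulVec_injective_iff_isUnit]
  intro u w huw
  have hx : Matrix.toEuclideanCLM (𝕜 := ℝ) (tridiag n b a d)
      ((WithLp.equiv 2 (Fin n → ℝ)).symm (u - w)) = 0 := by
    rw [show Matrix.toEuclideanCLM (𝕜 := ℝ) (tridiag n b a d) ((WithLp.equiv 2 (Fin n → ℝ)).symm (u - w)) = (WithLp.equiv 2 (Fin n → ℝ)).symm (Matrix.toLin' (tridiag n b a d) (u - w)) from Matrix.toEuclideanCLM_toLp _ _, Matrix.toLin'_apply, Matrix.mulVec_sub, huw,
      sub_self]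
    simp
  have hc := coercive b a d ((WithLp.equiv 2 (Fin n → ℝ)).symm (u - w))
  rw [hx, inner_zero_right] at hc
  have hn : ‖(WithLp.equiv 2 (Fin n → ℝ)).symm (u - w)‖ ^ 2 ≤ 0 := by nlinarith
  have h0 : (WithLp.equiv 2 (Fin n → ℝ)).symm (u - w) = 0 := by
    have := norm_nonneg ((WithLp.equiv 2 (Fin n → ℝ)).symm (u - w))
    have : ‖(WithLp.equiv 2 (Fin n → ℝ)).symm (u - w)‖ = 0 := by nlinarith
    exact norm_eq_zero.mp this
  have : u - w = 0 := by
    have := congrArg (WithLp.equiv 2 (Fin n → ℝ)) h0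
    simpa using this
  exact sub_eq_zero.mp this

lemma inv_bound {n : ℕ} (b a d : ℝ) (h : 0 < a - |b| - |d|) :
    ‖(tridiag n b a d)⁻¹‖ ≤ (a - |b| - |d|)⁻¹ := by
  set A := tridiag n b a d with hA
  have hunit : IsUnit A := isUnit_tridiag b a d h
  have hAA : A * A⁻¹ = 1 := Matrix.mul_nonsing_inv A ((Matrix.isUnit_iff_isUnit_det A).mp hunit)
  rw [Matrix.cstar_norm_def]
  refine ContinuousLinearMap.opNorm_le_bound _ (inv_nonneg.mpr h.le) fun y => ?_
  set x := Matrix.toEuclideanCLM (𝕜 := ℝ) A⁻¹ y with hxdef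
  have hxy : Matrix.toEuclideanCLM (𝕜 := ℝ) A x = y := by
    rw [hxdef, ← ContinuousLinearMap.comp_apply, ← ContinuousLinearMap.mul_def, ← _root_.map_mul,
      hAA, _root_.map_one, ContinuousLinearMap.one_apply]
  have hc := coercive b a d x
  rw [← hA] at hc
  have h1 : (inner ℝ x (Matrix.toEuclideanCLM (𝕜 := ℝ) A x) : ℝ) ≤ ‖x‖ * ‖y‖ := by
    rw [hxy]; exact real_inner_le_norm x y
  have h2 : (a - |b| - |d|) * ‖x‖ ^ 2 ≤ ‖x‖ * ‖y‖ := le_trans hc h1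
  show ‖x‖ ≤ (a - |b| - |d|)⁻¹ * ‖y‖
  rcases eq_or_lt_of_le (norm_nonneg x) with h0 | h0
  · rw [← h0]
    positivity
  · rw [inv_mul_eq_div, le_div_iff₀ h]
    nlinarith

/-- The matrix `X` of the fully discrete Crank–Nicolson compact scheme. -/
noncomputable def Xmat (N : ℕ) (δv δz : ℝ) : Matrix (Fin (N - 1)) (Fin (N - 1)) ℝ :=
  tridiag (N - 1) ((2 + δz) / (24 * δv)) (5 / (6 * δv)) ((2 - δz) / (24 * δv))

/-- The matrix `Y` of the fully discrete Crank–Nicolson compact scheme. -/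
noncomputable def Ymat (N : ℕ) (δz c : ℝ) : Matrix (Fin (N - 1)) (Fin (N - 1)) ℝ :=
  tridiag (N - 1) (-(c / (4 * δz)) - (c + c * δz ^ 2 / 12) / (2 * δz ^ 2))
    ((c + c * δz ^ 2 / 12) / δz ^ 2)
    (c / (4 * δz) - (c + c * δz ^ 2 / 12) / (2 * δz ^ 2))

/-- `W = X⁻¹ Y`. -/
noncomputable def Wmat (N : ℕ) (δv δz c : ℝ) : Matrix (Fin (N - 1)) (Fin (N - 1)) ℝ :=
  (Xmat N δv δz)⁻¹ * Ymat N δz c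

/-- The spectral norm (`L²` operator norm) of a real square matrix: the operator
norm of the induced linear map on the Euclidean space. -/
noncomputable def spectralNorm2 {n : ℕ} (A : Matrix (Fin n) (Fin n) ℝ) : ℝ :=
  ‖Matrix.toEuclideanCLM (𝕜 := ℝ) A‖

/-- `‖W‖₂ ≤ √(12/5)·(2c/δz² + c/6)·δv`. -/
theorem stmt13 (δv δz c : ℝ) (hδv : 0 < δv) (hδz : 0 < δz) (hδz2 : δz < 2)
    (hc : 0 < c) (N : ℕ) (hN : 2 ≤ N) :
    spectralNorm2 (Wmat N δv δz c) ≤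
      Real.sqrt (12 / 5) * (2 * c / δz ^ 2 + c / 6) * δv := by
  set aX : ℝ := 5 / (6 * δv) with haX
  set bX : ℝ := (2 + δz) / (24 * δv) with hbX
  set dX : ℝ := (2 - δz) / (24 * δv) with hdX
  set aY : ℝ := (c + c * δz ^ 2 / 12) / δz ^ 2 with haY
  set bY : ℝ := -(c / (4 * δz)) - (c + c * δz ^ 2 / 12) / (2 * δz ^ 2) with hbY
  set dY : ℝ := c / (4 * δz) - (c + c * δz ^ 2 / 12) / (2 * δz ^ 2) with hdY
  have e1 : aX - |bX| - |dX| = 2 / (3 * δv) := by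
    rw [abs_of_nonneg (div_nonneg (by linarith) (by positivity)),
        abs_of_nonneg (div_nonneg (by linarith) (by positivity))]
    rw [haX, hbX, hdX]
    field_simp
    ring
  have hE : c / (4 * δz) ≤ (c + c * δz ^ 2 / 12) / (2 * δz ^ 2) := by
    rw [div_le_div_iff₀ (by positivity) (by positivity)]
    nlinarith [mul_nonneg (mul_nonneg hc.le hδz.le) (by linarith : (0:ℝ) ≤ 2 - δz),
      mul_pos hc (mul_pos hδz hδz)]
  have e2 : |aY| + |bY| + |dY| = 2 * c / δz ^ 2 + c / 6 := by
    have h1 : |aY| = aY := abs_of_nonneg (by positivity)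
    have h2 : |bY| = -bY := abs_of_nonpos (by
      have : (0:ℝ) ≤ c / (4 * δz) := by positivity
      have : (0:ℝ) ≤ (c + c * δz ^ 2 / 12) / (2 * δz ^ 2) := by positivity
      rw [hbY]; linarith)
    have h3 : |dY| = -dY := abs_of_nonpos (by rw [hdY]; linarith)
    rw [h1, h2, h3, haY, hbY, hdY]
    field_simp
    ring
  have hμ : (0:ℝ) < aX - |bX| - |dX| := by rw [e1]; positivity
  have hX : ‖(Xmat N δv δz)⁻¹‖ ≤ (2 / (3 * δv))⁻¹ := by
    have h := inv_bound (n := N - 1) bX aX dX hμ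
    rw [e1] at h
    exact h
  have hY : ‖Ymat N δz c‖ ≤ 2 * c / δz ^ 2 + c / 6 := by
    have h := norm_tridiag_le (N - 1) bY aY dY
    rw [e2] at h
    exact h
  have hW : spectralNorm2 (Wmat N δv δz c) = ‖(Xmat N δv δz)⁻¹ * Ymat N δz c‖ :=
    (Matrix.cstar_norm_def _).symm
  have hS : (0:ℝ) < 2 * c / δz ^ 2 + c / 6 := by positivity
  have hsq : (3:ℝ) / 2 ≤ Real.sqrt (12 / 5) := by
    nlinarith [Real.sq_sqrt (by norm_num : (0:ℝ) ≤ 12 / 5), Real.sqrt_nonneg (12 / 5 : ℝ)]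
  rw [hW]
  calc ‖(Xmat N δv δz)⁻¹ * Ymat N δz c‖
      ≤ ‖(Xmat N δv δz)⁻¹‖ * ‖Ymat N δz c‖ := norm_mul_le _ _
    _ ≤ (2 / (3 * δv))⁻¹ * (2 * c / δz ^ 2 + c / 6) :=
        mul_le_mul hX hY (norm_nonneg _) (by positivity)
    _ = 3 * δv / 2 * (2 * c / δz ^ 2 + c / 6) := by
        rw [inv_div]
    _ ≤ Real.sqrt (12 / 5) * (2 * c / δz ^ 2 + c / 6) * δv := by
        nlinarith [mul_le_mul_of_nonneg_right hsq (mul_pos hS hδv).le]
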